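/- There exists an absolute constant C₀ > 0 with the following property. Let s ≥ 2 and 1 ≤ a < b be integers, let 𝒟 ⊆ {0,1,…,s−1} be a digit set with 0 ∈ 𝒟 and s−1 ∉ 𝒟, and let ε ∈ (0,1). Define 𝔅(ξ) := ε 𝔅*(ξ) + (1 − ε) ℭ(ξ) and 𝔴(ξ) := 1̂(ξ s^{−b}) 𝔅(ξ) − 1̂(ξ s^{−a}). Then 𝔴(0) = 0 and |𝔴(ξ)| ≤ C₀ · min(1, |ξ|/s^a, s^b/|ξ|) for every nonzero ξ ∈ ℤ, uniformly in ε ∈ (0,1). -/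

import Mathlib

open Finset

/-- `e(y) = exp(-2πi y)`. -/
noncomputable def eneg (y : ℝ) : ℂ := Complex.exp (-(2 * Real.pi * Complex.I * (y : ℂ)))

/-- `1̂(θ) = ∫₀¹ e(xθ) dx`. -/
noncomputable def oneHat (θ : ℝ) : ℂ := ∫ x in (0:ℝ)..1, eneg (x * θ)

/-- The `j`-th base-`s` digit of the natural number `n`. -/
def digitOf (s n j : ℕ) : ℕ := n / s ^ j % s

/-- `𝔄(ξ; N, s, a) = N⁻¹ Σ_{k<N} e(ξ k s^{-a})`. -/
noncomputable def Afun (N s a : ℕ) (ξ : ℤ) : ℂ :=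
  (N : ℂ)⁻¹ * ∑ k ∈ Finset.range N, eneg ((ξ : ℝ) * k / (s : ℝ) ^ a)

/-- `ℭ(ξ) = s^{a-b} Σ_{ℓ < s^{b-a}} e(ξ ℓ s^{-b})`. -/
noncomputable def Cfun (s a b : ℕ) (ξ : ℤ) : ℂ :=
  (((s : ℝ) ^ a / (s : ℝ) ^ b : ℝ) : ℂ) *
    ∑ ℓ ∈ Finset.range (s ^ (b - a)), eneg ((ξ : ℝ) * ℓ / (s : ℝ) ^ b)

/-- `𝕃*`: the set of `ℓ < s^{b-a}` all of whose `b-a` base-`s` digits lie in `D`. -/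
def Lstar (s a b : ℕ) (D : Finset ℕ) : Finset ℕ :=
  (Finset.range (s ^ (b - a))).filter fun ℓ => ∀ j < b - a, digitOf s ℓ j ∈ D

/-- `𝔅*(ξ) = r^{a-b} Σ_{ℓ ∈ 𝕃*} e(ξ ℓ s^{-b})`, where `r = #D`. -/
noncomputable def Bstar (s a b : ℕ) (D : Finset ℕ) (ξ : ℤ) : ℂ :=
  (((D.card : ℝ) ^ a / (D.card : ℝ) ^ b : ℝ) : ℂ) *
    ∑ ℓ ∈ Lstar s a b D, eneg ((ξ : ℝ) * ℓ / (s : ℝ) ^ b)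

/-- `g(ξ, k; s, 𝒜) = (#𝒜)⁻¹ Σ_{d ∈ 𝒜} e(ξ d s^{-k})`. -/
noncomputable def gfun (s : ℕ) (A : Finset ℕ) (ξ : ℤ) (k : ℕ) : ℂ :=
  (A.card : ℂ)⁻¹ * ∑ d ∈ A, eneg ((ξ : ℝ) * d / (s : ℝ) ^ k)


section Helpers

lemma eneg_eq (y : ℝ) : eneg y = Complex.exp ((↑(-(2 * Real.pi * y)) : ℂ) * Complex.I) := by
  unfold eneg; push_cast; ring_nf

lemma norm_eneg (y : ℝ) : ‖eneg y‖ = 1 := by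
  rw [eneg_eq, Complex.norm_exp_ofReal_mul_I]

lemma norm_expI_sub_one (x : ℝ) : ‖Complex.exp ((x:ℂ) * Complex.I) - 1‖ ≤ |x| := by
  have h2 : ‖Complex.exp ((x:ℂ) * Complex.I) - 1‖^2 = 2 - 2 * Real.cos x := by
    rw [Complex.exp_mul_I, Complex.sq_norm]
    simp [Complex.normSq_apply, Complex.add_re, Complex.add_im, Complex.cos_ofReal_re,
      Complex.sin_ofReal_re]
    nlinarith [Real.sin_sq_add_cos_sq x]
  have hs : Real.sin (x/2)^2 = 1/2 - Real.cos x / 2 := by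
    have h1 := Real.cos_sq (x/2)
    have h' : Real.sin (x/2)^2 + Real.cos (x/2)^2 = 1 := Real.sin_sq_add_cos_sq _
    rw [show 2 * (x/2) = x by ring] at h1
    nlinarith
  have hb : |Real.sin (x/2)| ≤ |x/2| := Real.abs_sin_le_abs
  have hb2 : Real.sin (x/2)^2 ≤ x^2/4 := by
    have := mul_self_le_mul_self (abs_nonneg (Real.sin (x/2))) hb
    rw [abs_mul_abs_self, abs_mul_abs_self] at this
    nlinarith
  have hn : (0:ℝ) ≤ ‖Complex.exp ((x:ℂ) * Complex.I) - 1‖ := norm_nonneg _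
  have hx2 : ‖Complex.exp ((x:ℂ) * Complex.I) - 1‖^2 ≤ x^2 := by nlinarith
  calc ‖Complex.exp ((x:ℂ) * Complex.I) - 1‖
      = Real.sqrt (‖Complex.exp ((x:ℂ) * Complex.I) - 1‖^2) := (Real.sqrt_sq hn).symm
    _ ≤ Real.sqrt (x^2) := Real.sqrt_le_sqrt hx2
    _ = |x| := Real.sqrt_sq_eq_abs x

lemma norm_eneg_sub_one (y : ℝ) : ‖eneg y - 1‖ ≤ 2 * Real.pi * |y| := by
  rw [eneg_eq]
  calc ‖Complex.exp ((↑(-(2 * Real.pi * y)) : ℂ) * Complex.I) - 1‖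
      ≤ |(-(2 * Real.pi * y))| := norm_expI_sub_one _
    _ = 2 * Real.pi * |y| := by
        rw [abs_neg, abs_mul, abs_mul]
        rw [abs_of_nonneg (by norm_num : (0:ℝ) ≤ 2), abs_of_nonneg Real.pi_pos.le]

lemma eneg_add (u v : ℝ) : eneg (u + v) = eneg u * eneg v := by
  unfold eneg; rw [← Complex.exp_add]; push_cast; ring_nf

lemma norm_eneg_sub (u v : ℝ) : ‖eneg u - eneg v‖ ≤ 2 * Real.pi * |u - v| := by
  have h : eneg u - eneg v = eneg v * (eneg (u - v) - 1) := by
    rw [mul_sub, mul_one, ← eneg_add]; ring_nf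
  rw [h, norm_mul, norm_eneg, one_mul]
  exact norm_eneg_sub_one _

lemma cont_eneg (θ : ℝ) : Continuous fun x : ℝ => eneg (x * θ) := by
  unfold eneg; fun_prop

lemma intble (θ : ℝ) : IntervalIntegrable (fun x : ℝ => eneg (x * θ))
    MeasureTheory.volume 0 1 := (cont_eneg θ).intervalIntegrable _ _

lemma oneHat_zero : oneHat 0 = 1 := by
  simp [oneHat, eneg]

lemma norm_oneHat_le_one (θ : ℝ) : ‖oneHat θ‖ ≤ 1 := by
  have := intervalIntegral.norm_integral_le_of_norm_le_const
    (C := 1) (f := fun x : ℝ => eneg (x * θ)) (a := (0:ℝ)) (b := 1)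
    (fun x _ => le_of_eq (norm_eneg _))
  simpa [oneHat] using this

lemma norm_oneHat_sub (θ θ' : ℝ) : ‖oneHat θ - oneHat θ'‖ ≤ 2 * Real.pi * |θ - θ'| := by
  have hint : oneHat θ - oneHat θ' = ∫ x in (0:ℝ)..1, (eneg (x * θ) - eneg (x * θ')) := by
    rw [oneHat, oneHat, intervalIntegral.integral_sub (intble θ) (intble θ')]
  rw [hint]
  have := intervalIntegral.norm_integral_le_of_norm_le_const
    (C := 2 * Real.pi * |θ - θ'|) (f := fun x : ℝ => eneg (x * θ) - eneg (x * θ'))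
    (a := (0:ℝ)) (b := 1) ?_
  · simpa using this
  · intro x hx
    rw [Set.uIoc_of_le (by norm_num : (0:ℝ) ≤ 1)] at hx
    calc ‖eneg (x * θ) - eneg (x * θ')‖ ≤ 2 * Real.pi * |x * θ - x * θ'| := norm_eneg_sub _ _
      _ = 2 * Real.pi * (|x| * |θ - θ'|) := by rw [← mul_sub, abs_mul]
      _ ≤ 2 * Real.pi * (1 * |θ - θ'|) := by
          have : |x| ≤ 1 := by rw [abs_of_nonneg hx.1.le]; exact hx.2
          have := mul_le_mul_of_nonneg_right this (abs_nonneg (θ - θ'))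
          nlinarith [Real.pi_pos]
      _ = 2 * Real.pi * |θ - θ'| := by ring

lemma norm_oneHat_le_inv (θ : ℝ) (hθ : θ ≠ 0) : ‖oneHat θ‖ ≤ 1 / (Real.pi * |θ|) := by
  set c : ℂ := -(2 * Real.pi * Complex.I * (θ:ℂ)) with hcdef
  have hc : c ≠ 0 := by
    simp [hcdef, Real.pi_ne_zero, hθ, Complex.I_ne_zero, Complex.ext_iff]
  have hval : oneHat θ = (Complex.exp (c * (1:ℝ)) - Complex.exp (c * (0:ℝ))) / c := by
    have hfun : (fun x : ℝ => eneg (x * θ)) = fun x : ℝ => Complex.exp (c * x) := by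
      funext x; unfold eneg; rw [hcdef]; congr 1; push_cast; ring
    rw [oneHat, hfun, integral_exp_mul_complex hc]
  rw [hval, norm_div]
  have h1 : ‖Complex.exp (c * (1:ℝ)) - Complex.exp (c * (0:ℝ))‖ ≤ 2 := by
    have e1 : Complex.exp (c * (1:ℝ)) = eneg θ := by
      unfold eneg; rw [hcdef]; norm_num
    have e0 : Complex.exp (c * (0:ℝ)) = 1 := by norm_num
    rw [e1, e0]
    calc ‖eneg θ - 1‖ ≤ ‖eneg θ‖ + ‖(1:ℂ)‖ := norm_sub_le _ _
      _ = 2 := by rw [norm_eneg]; norm_num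
  have h2 : ‖c‖ = 2 * Real.pi * |θ| := by
    rw [hcdef, norm_neg]
    simp only [norm_mul, Complex.norm_I, Complex.norm_real, Real.norm_eq_abs, Complex.norm_two]
    rw [abs_of_nonneg Real.pi_pos.le]
    ring
  rw [h2, div_le_div_iff₀ (by positivity) (by positivity)]
  have hπ : 0 < Real.pi := Real.pi_pos
  have hθ' : 0 < |θ| := abs_pos.mpr hθ
  nlinarith [mul_le_mul_of_nonneg_right h1 (by positivity : (0:ℝ) ≤ Real.pi * |θ|)]

lemma digitOf_zero (s ℓ : ℕ) : digitOf s ℓ 0 = ℓ % s := by simp [digitOf]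

lemma digitOf_succ (s ℓ j : ℕ) : digitOf s ℓ (j + 1) = digitOf s (ℓ / s) j := by
  simp [digitOf, Nat.div_div_eq_div_mul, pow_succ']

lemma card_digits (s : ℕ) (hs : 1 ≤ s) (D : Finset ℕ) (hD : D ⊆ Finset.range s) :
    ∀ n : ℕ, ((Finset.range (s^n)).filter fun ℓ => ∀ j < n, digitOf s ℓ j ∈ D).card
      = D.card ^ n := by
  intro n
  induction n with
  | zero => simp
  | succ n ih =>
    have key : ((Finset.range (s^(n+1))).filter fun ℓ => ∀ j < n + 1, digitOf s ℓ j ∈ D).card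
        = (D ×ˢ ((Finset.range (s^n)).filter fun ℓ => ∀ j < n, digitOf s ℓ j ∈ D)).card := by
      apply Finset.card_bij' (i := fun ℓ _ => (ℓ % s, ℓ / s))
        (j := fun p _ => p.1 + s * p.2)
      · intro ℓ hℓ
        rw [Finset.mem_filter, Finset.mem_range] at hℓ
        obtain ⟨hlt, hdig⟩ := hℓ
        rw [Finset.mem_product, Finset.mem_filter, Finset.mem_range]
        refine ⟨?_, ?_, ?_⟩
        · have := hdig 0 (Nat.succ_pos n); rwa [digitOf_zero] at this
        · rw [Nat.div_lt_iff_lt_mul (by omega)]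
          rw [pow_succ] at hlt; exact hlt
        · intro j hj
          have := hdig (j+1) (by omega)
          rwa [digitOf_succ] at this
      · intro p hp
        rw [Finset.mem_product, Finset.mem_filter, Finset.mem_range] at hp
        obtain ⟨hd, hm, hdig⟩ := hp
        have hds : p.1 < s := Finset.mem_range.mp (hD hd)
        rw [Finset.mem_filter, Finset.mem_range]
        have hdivmod : (p.1 + s * p.2) % s = p.1 ∧ (p.1 + s * p.2) / s = p.2 := by
          constructor
          · rw [Nat.add_mul_mod_self_left, Nat.mod_eq_of_lt hds]
          · rw [Nat.add_mul_div_left _ _ (by omega : 0 < s), Nat.div_eq_of_lt hds, zero_add]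
        refine ⟨?_, ?_⟩
        · calc p.1 + s * p.2 < s + s * p.2 := by omega
            _ = s * (p.2 + 1) := by ring
            _ ≤ s * s^n := Nat.mul_le_mul_left s hm
            _ = s^(n+1) := (pow_succ' s n).symm
        · intro j hj
          match j with
          | 0 => rw [digitOf_zero, hdivmod.1]; exact hd
          | j+1 =>
            rw [digitOf_succ, hdivmod.2]
            exact hdig j (by omega)
      · intro ℓ _; exact Nat.mod_add_div ℓ s
      · intro p hp
        rw [Finset.mem_product] at hp
        have hds : p.1 < s := Finset.mem_range.mp (hD hp.1)
        ext
        · rw [Nat.add_mul_mod_self_left, Nat.mod_eq_of_lt hds]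
        · rw [Nat.add_mul_div_left _ _ (by omega : 0 < s), Nat.div_eq_of_lt hds, zero_add]
    rw [key, Finset.card_product, Finset.filter_congr_decidable] at *
    rw [ih, pow_succ']

lemma eneg_zero : eneg 0 = 1 := by simp [eneg]

lemma norm_avg_le_one (c : ℝ) (hc : 0 ≤ c) (F : Finset ℕ) (hcard : c * (F.card : ℝ) = 1)
    (f : ℕ → ℝ) : ‖((c : ℝ) : ℂ) * ∑ ℓ ∈ F, eneg (f ℓ)‖ ≤ 1 := by
  rw [norm_mul, Complex.norm_real, Real.norm_eq_abs, abs_of_nonneg hc]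
  have hsum : ‖∑ ℓ ∈ F, eneg (f ℓ)‖ ≤ (F.card : ℝ) := by
    calc ‖∑ ℓ ∈ F, eneg (f ℓ)‖ ≤ ∑ ℓ ∈ F, ‖eneg (f ℓ)‖ := norm_sum_le _ _
      _ = (F.card : ℝ) := by simp only [norm_eneg, Finset.sum_const, nsmul_eq_mul, mul_one]
  calc c * ‖∑ ℓ ∈ F, eneg (f ℓ)‖ ≤ c * (F.card : ℝ) :=
        mul_le_mul_of_nonneg_left hsum hc
    _ = 1 := hcard

lemma norm_avg_sub_one (c : ℝ) (hc : 0 ≤ c) (F : Finset ℕ) (hcard : c * (F.card : ℝ) = 1)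
    (f : ℕ → ℝ) (M : ℝ) (hM : ∀ ℓ ∈ F, |f ℓ| ≤ M) :
    ‖((c : ℝ) : ℂ) * ∑ ℓ ∈ F, eneg (f ℓ) - 1‖ ≤ 2 * Real.pi * M := by
  have hcC : ((c : ℝ) : ℂ) * (F.card : ℂ) = 1 := by
    have := congrArg (fun t : ℝ => (t : ℂ)) hcard
    push_cast at this ⊢
    exact this
  have hsplit : ((c : ℝ) : ℂ) * ∑ ℓ ∈ F, eneg (f ℓ) - 1
      = ((c : ℝ) : ℂ) * ∑ ℓ ∈ F, (eneg (f ℓ) - 1) := by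
    rw [Finset.sum_sub_distrib, mul_sub, Finset.sum_const, nsmul_eq_mul, mul_one, hcC]
  rw [hsplit, norm_mul, Complex.norm_real, Real.norm_eq_abs, abs_of_nonneg hc]
  have hsum : ‖∑ ℓ ∈ F, (eneg (f ℓ) - 1)‖ ≤ (F.card : ℝ) * (2 * Real.pi * M) := by
    calc ‖∑ ℓ ∈ F, (eneg (f ℓ) - 1)‖ ≤ ∑ ℓ ∈ F, ‖eneg (f ℓ) - 1‖ := norm_sum_le _ _
      _ ≤ ∑ _ℓ ∈ F, (2 * Real.pi * M) := by
          apply Finset.sum_le_sum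
          intro ℓ hℓ
          refine le_trans (norm_eneg_sub_one (f ℓ)) ?_
          have := hM ℓ hℓ
          nlinarith [Real.pi_pos]
      _ = (F.card : ℝ) * (2 * Real.pi * M) := by rw [Finset.sum_const, nsmul_eq_mul]
  calc c * ‖∑ ℓ ∈ F, (eneg (f ℓ) - 1)‖ ≤ c * ((F.card : ℝ) * (2 * Real.pi * M)) :=
        mul_le_mul_of_nonneg_left hsum hc
    _ = (c * (F.card : ℝ)) * (2 * Real.pi * M) := by ring
    _ = 2 * Real.pi * M := by rw [hcard, one_mul]

end Helpers

/-- Lemma 9.5 (Pramanik–Zhang): there is an absolute constant `C₀ > 0` such that the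
function `𝔴(ξ) = 1̂(ξ s^{−b}) 𝔅(ξ) − 1̂(ξ s^{−a})`, with
`𝔅 = ε 𝔅* + (1−ε) ℭ`, satisfies `𝔴(0) = 0` and
`|𝔴(ξ)| ≤ C₀ min(1, |ξ|/s^a, s^b/|ξ|)` for all nonzero `ξ`, uniformly in `ε ∈ (0,1)`. -/
theorem wfun_estimate :
    ∃ C₀ : ℝ, 0 < C₀ ∧
      ∀ s a b : ℕ, ∀ D : Finset ℕ, 2 ≤ s → 1 ≤ a → a < b →
        D ⊆ Finset.range s → 0 ∈ D → s - 1 ∉ D →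
        ∀ ε : ℝ, ε ∈ Set.Ioo (0 : ℝ) 1 →
          (oneHat ((0 : ℝ) / (s : ℝ) ^ b) *
              ((ε : ℂ) * Bstar s a b D 0 + ((1 - ε : ℝ) : ℂ) * Cfun s a b 0) -
            oneHat ((0 : ℝ) / (s : ℝ) ^ a) = 0) ∧
          ∀ ξ : ℤ, ξ ≠ 0 →
            ‖oneHat ((ξ : ℝ) / (s : ℝ) ^ b) *
                ((ε : ℂ) * Bstar s a b D ξ + ((1 - ε : ℝ) : ℂ) * Cfun s a b ξ) -
              oneHat ((ξ : ℝ) / (s : ℝ) ^ a)‖ ≤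
              C₀ * min (min 1 (|(ξ : ℝ)| / (s : ℝ) ^ a)) ((s : ℝ) ^ b / |(ξ : ℝ)|) := by
  refine ⟨20, by norm_num, ?_⟩
  intro s a b D hs ha hab hD h0D _hsD ε hε
  obtain ⟨hε0, hε1⟩ := hε
  -- basic positivity
  have hs0 : (0:ℝ) < (s:ℝ) := by exact_mod_cast (by omega : 0 < s)
  have hsa : (0:ℝ) < (s:ℝ)^a := by positivity
  have hsb : (0:ℝ) < (s:ℝ)^b := by positivity
  have hr : 0 < D.card := Finset.card_pos.mpr ⟨0, h0D⟩
  have hr0 : (0:ℝ) < (D.card:ℝ) := by exact_mod_cast hr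
  -- cardinality of Lstar
  have hLcard : (Lstar s a b D).card = D.card ^ (b - a) :=
    card_digits s (by omega) D hD (b - a)
  -- coefficient identities
  have hcB0 : 0 ≤ (D.card : ℝ) ^ a / (D.card : ℝ) ^ b := by positivity
  have hcC0 : 0 ≤ (s : ℝ) ^ a / (s : ℝ) ^ b := by positivity
  have hpowr : (D.card:ℝ) ^ b = (D.card:ℝ) ^ a * (D.card:ℝ) ^ (b - a) := by
    rw [← pow_add]; congr 1; omega
  have hpows : (s:ℝ) ^ b = (s:ℝ) ^ a * (s:ℝ) ^ (b - a) := by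
    rw [← pow_add]; congr 1; omega
  have hcBcard : ((D.card : ℝ) ^ a / (D.card : ℝ) ^ b) * ((Lstar s a b D).card : ℝ) = 1 := by
    rw [hLcard]
    push_cast
    rw [hpowr]
    field_simp
  have hcCcard : ((s : ℝ) ^ a / (s : ℝ) ^ b) * ((Finset.range (s ^ (b - a))).card : ℝ) = 1 := by
    rw [Finset.card_range]
    push_cast
    rw [hpows]
    field_simp
  constructor
  · -- value at 0
    have hB0 : Bstar s a b D 0 = 1 := by
      unfold Bstar
      have : ∀ ℓ ∈ Lstar s a b D, eneg (((0:ℤ) : ℝ) * ℓ / (s : ℝ) ^ b) = 1 := by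
        intro ℓ _; norm_num [eneg_zero]
      rw [Finset.sum_congr rfl this, Finset.sum_const, nsmul_eq_mul, mul_one]
      have := congrArg (fun t : ℝ => (t : ℂ)) hcBcard
      push_cast at this ⊢
      exact_mod_cast this
    have hC0 : Cfun s a b 0 = 1 := by
      unfold Cfun
      have : ∀ ℓ ∈ Finset.range (s ^ (b - a)), eneg (((0:ℤ) : ℝ) * ℓ / (s : ℝ) ^ b) = 1 := by
        intro ℓ _; norm_num [eneg_zero]
      rw [Finset.sum_congr rfl this, Finset.sum_const, Finset.card_range, nsmul_eq_mul, mul_one]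
      have := congrArg (fun t : ℝ => (t : ℂ)) hcCcard
      rw [Finset.card_range] at this
      push_cast at this ⊢
      exact_mod_cast this
    rw [hB0, hC0, zero_div, zero_div, oneHat_zero]
    push_cast
    ring
  · -- nonzero ξ
    intro ξ hξ
    have hξ0 : ((ξ:ℝ)) ≠ 0 := by exact_mod_cast hξ
    have hξpos : 0 < |(ξ:ℝ)| := abs_pos.mpr hξ0
    set M : ℝ := |(ξ:ℝ)| / (s:ℝ)^a with hMdef
    have hM0 : 0 ≤ M := by positivity
    -- pointwise bound on phases
    have hphase : ∀ ℓ ∈ Finset.range (s ^ (b - a)), |(ξ:ℝ) * ℓ / (s:ℝ)^b| ≤ M := by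
      intro ℓ hℓ
      have hℓ' : (ℓ:ℝ) ≤ (s:ℝ)^(b-a) := by
        exact_mod_cast (Finset.mem_range.mp hℓ).le
      rw [abs_div, abs_mul, abs_of_nonneg (Nat.cast_nonneg ℓ : (0:ℝ) ≤ (ℓ:ℕ)),
        abs_of_nonneg hsb.le, hMdef, div_le_div_iff₀ hsb hsa]
      calc |(ξ:ℝ)| * (ℓ:ℝ) * (s:ℝ)^a ≤ |(ξ:ℝ)| * (s:ℝ)^(b-a) * (s:ℝ)^a := by gcongr
        _ = |(ξ:ℝ)| * (s:ℝ)^b := by rw [hpows]; ring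
    have hphaseL : ∀ ℓ ∈ Lstar s a b D, |(ξ:ℝ) * ℓ / (s:ℝ)^b| ≤ M := by
      intro ℓ hℓ
      exact hphase ℓ (Finset.mem_of_mem_filter ℓ hℓ)
    -- norms of Bstar and Cfun
    have hBnorm : ‖Bstar s a b D ξ‖ ≤ 1 :=
      norm_avg_le_one _ hcB0 (Lstar s a b D) hcBcard _
    have hCnorm : ‖Cfun s a b ξ‖ ≤ 1 :=
      norm_avg_le_one _ hcC0 (Finset.range (s ^ (b - a))) hcCcard _
    have hBsub : ‖Bstar s a b D ξ - 1‖ ≤ 2 * Real.pi * M :=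
      norm_avg_sub_one _ hcB0 (Lstar s a b D) hcBcard _ M hphaseL
    have hCsub : ‖Cfun s a b ξ - 1‖ ≤ 2 * Real.pi * M :=
      norm_avg_sub_one _ hcC0 (Finset.range (s ^ (b - a))) hcCcard _ M hphase
    set Bξ : ℂ := (ε : ℂ) * Bstar s a b D ξ + ((1 - ε : ℝ) : ℂ) * Cfun s a b ξ with hBξdef
    have hnε : ‖(ε : ℂ)‖ = ε := by
      rw [Complex.norm_real, Real.norm_eq_abs, abs_of_nonneg hε0.le]
    have hnε' : ‖((1 - ε : ℝ) : ℂ)‖ = 1 - ε := by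
      rw [Complex.norm_real, Real.norm_eq_abs, abs_of_nonneg (by linarith)]
    have hBξnorm : ‖Bξ‖ ≤ 1 := by
      calc ‖Bξ‖ ≤ ‖(ε : ℂ) * Bstar s a b D ξ‖ + ‖((1 - ε : ℝ) : ℂ) * Cfun s a b ξ‖ :=
            norm_add_le _ _
        _ = ε * ‖Bstar s a b D ξ‖ + (1 - ε) * ‖Cfun s a b ξ‖ := by
            rw [norm_mul, norm_mul, hnε, hnε']
        _ ≤ ε * 1 + (1 - ε) * 1 := by
            gcongr <;> linarith
        _ = 1 := by ring
    have hBξsub : ‖Bξ - 1‖ ≤ 2 * Real.pi * M := by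
      have hsplit : Bξ - 1 = (ε : ℂ) * (Bstar s a b D ξ - 1)
          + ((1 - ε : ℝ) : ℂ) * (Cfun s a b ξ - 1) := by
        rw [hBξdef]; push_cast; ring
      rw [hsplit]
      calc ‖(ε : ℂ) * (Bstar s a b D ξ - 1) + ((1 - ε : ℝ) : ℂ) * (Cfun s a b ξ - 1)‖
          ≤ ε * ‖Bstar s a b D ξ - 1‖ + (1 - ε) * ‖Cfun s a b ξ - 1‖ := by
            refine le_trans (norm_add_le _ _) ?_
            rw [norm_mul, norm_mul, hnε, hnε']
        _ ≤ ε * (2 * Real.pi * M) + (1 - ε) * (2 * Real.pi * M) := by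
            gcongr <;> linarith
        _ = 2 * Real.pi * M := by ring
    set θb : ℝ := (ξ:ℝ) / (s:ℝ)^b with hθbdef
    set θa : ℝ := (ξ:ℝ) / (s:ℝ)^a with hθadef
    have hθb0 : θb ≠ 0 := div_ne_zero hξ0 hsb.ne'
    have hθa0 : θa ≠ 0 := div_ne_zero hξ0 hsa.ne'
    set w : ℂ := oneHat θb * Bξ - oneHat θa with hwdef
    have hπ : 0 < Real.pi := Real.pi_pos
    have hπ315 : Real.pi < 3.15 := by
      have := Real.pi_lt_d2
      linarith
    -- bound 1 : ‖w‖ ≤ 2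
    have h1 : ‖w‖ ≤ 2 := by
      calc ‖w‖ ≤ ‖oneHat θb‖ * ‖Bξ‖ + ‖oneHat θa‖ := by
            refine le_trans (norm_sub_le _ _) ?_
            rw [norm_mul]
        _ ≤ 2 := by
            nlinarith [norm_oneHat_le_one θb, norm_oneHat_le_one θa, hBξnorm,
              norm_nonneg (oneHat θb), norm_nonneg Bξ, norm_nonneg (oneHat θa)]
    -- bound 2 : ‖w‖ ≤ 19 * M
    have h2 : ‖w‖ ≤ 19 * M := by
      have hsplit : w = oneHat θb * (Bξ - 1) + (oneHat θb - oneHat θa) := by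
        rw [hwdef]; ring
      have hpow : (s:ℝ)^a ≤ (s:ℝ)^b :=
        pow_le_pow_right₀ (by exact_mod_cast (by omega : 1 ≤ s)) (by omega)
      have hdiff : |θb - θa| ≤ 2 * M := by
        have hba : |(ξ:ℝ)| / (s:ℝ)^b ≤ M := by
          rw [hMdef]
          gcongr
        calc |θb - θa| ≤ |θb| + |θa| := abs_sub _ _
          _ = |(ξ:ℝ)| / (s:ℝ)^b + |(ξ:ℝ)| / (s:ℝ)^a := by
              rw [hθbdef, hθadef, abs_div, abs_div, abs_of_nonneg hsb.le,
                abs_of_nonneg hsa.le]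
          _ ≤ M + M := add_le_add hba (by rw [hMdef])
          _ = 2 * M := by ring
      calc ‖w‖ ≤ ‖oneHat θb‖ * ‖Bξ - 1‖ + ‖oneHat θb - oneHat θa‖ := by
            rw [hsplit]
            refine le_trans (norm_add_le _ _) ?_
            rw [norm_mul]
        _ ≤ 19 * M := by
            have e1 : ‖oneHat θb‖ * ‖Bξ - 1‖ ≤ 2 * Real.pi * M := by
              calc ‖oneHat θb‖ * ‖Bξ - 1‖ ≤ 1 * (2 * Real.pi * M) :=
                    mul_le_mul (norm_oneHat_le_one θb) hBξsub (norm_nonneg _) (by norm_num)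
                _ = 2 * Real.pi * M := one_mul _
            have e2 : ‖oneHat θb - oneHat θa‖ ≤ 2 * Real.pi * (2 * M) :=
              le_trans (norm_oneHat_sub θb θa)
                (mul_le_mul_of_nonneg_left hdiff (by positivity))
            have e3 : Real.pi * M ≤ 3.15 * M := mul_le_mul_of_nonneg_right hπ315.le hM0
            linarith
    -- bound 3 : ‖w‖ ≤ 2 * (s^b / |ξ|)
    have h3 : ‖w‖ ≤ 2 * ((s:ℝ)^b / |(ξ:ℝ)|) := by
      have habsθb : |θb| = |(ξ:ℝ)| / (s:ℝ)^b := by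
        rw [hθbdef, abs_div, abs_of_nonneg hsb.le]
      have habsθa : |θa| = |(ξ:ℝ)| / (s:ℝ)^a := by
        rw [hθadef, abs_div, abs_of_nonneg hsa.le]
      have hξπ : |(ξ:ℝ)| ≤ Real.pi * |(ξ:ℝ)| :=
        le_mul_of_one_le_left hξpos.le (by linarith [Real.pi_gt_three])
      have hpow : (s:ℝ)^a ≤ (s:ℝ)^b :=
        pow_le_pow_right₀ (by exact_mod_cast (by omega : 1 ≤ s)) (by omega)
      have hb' : ‖oneHat θb‖ ≤ (s:ℝ)^b / |(ξ:ℝ)| := by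
        calc ‖oneHat θb‖ ≤ 1 / (Real.pi * |θb|) := norm_oneHat_le_inv θb hθb0
          _ = (s:ℝ)^b / (Real.pi * |(ξ:ℝ)|) := by
              rw [habsθb]; field_simp
          _ ≤ (s:ℝ)^b / |(ξ:ℝ)| := by gcongr
      have ha' : ‖oneHat θa‖ ≤ (s:ℝ)^b / |(ξ:ℝ)| := by
        calc ‖oneHat θa‖ ≤ 1 / (Real.pi * |θa|) := norm_oneHat_le_inv θa hθa0
          _ = (s:ℝ)^a / (Real.pi * |(ξ:ℝ)|) := by
              rw [habsθa]; field_simp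
          _ ≤ (s:ℝ)^b / |(ξ:ℝ)| := by gcongr
      calc ‖w‖ ≤ ‖oneHat θb‖ * ‖Bξ‖ + ‖oneHat θa‖ := by
            refine le_trans (norm_sub_le _ _) ?_
            rw [norm_mul]
        _ ≤ 2 * ((s:ℝ)^b / |(ξ:ℝ)|) := by
            have e1 : ‖oneHat θb‖ * ‖Bξ‖ ≤ ((s:ℝ)^b / |(ξ:ℝ)|) * 1 :=
              mul_le_mul hb' hBξnorm (norm_nonneg _) (by positivity)
            linarith
    -- combine
    show ‖w‖ ≤ 20 * min (min 1 M) ((s:ℝ)^b / |(ξ:ℝ)|)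
    rcases min_cases (min 1 M) ((s:ℝ)^b / |(ξ:ℝ)|) with ⟨hm, _⟩ | ⟨hm, _⟩
    · rw [hm]
      rcases min_cases (1:ℝ) M with ⟨hm2, _⟩ | ⟨hm2, _⟩
      · rw [hm2]; linarith
      · rw [hm2]; linarith
    · rw [hm]
      have : (0:ℝ) ≤ (s:ℝ)^b / |(ξ:ℝ)| := by positivity
      linarith
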